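/- Let Σ ∈ ℝ^{(d-1)×(d-1)} be symmetric positive definite, m ∈ {1,…,d}, γ ∈ ℝ^{d-1}, and let x ∈ (0,∞)^d with x_m > 0. Then exp[−½ log(x_{−m}/x_m)^⊤ Σ^{-1} log(x_{−m}/x_m) − ½ γ^⊤ Σ^{-1} log(x_{−m}/x_m)] · (1/x_m) equals exp[μ^⊤ log x − ½ (log x)^⊤ Θ (log x)], where μ ∈ ℝ^d has entries μ_j = −(Σ^{-1}γ)_{j'}/2 for j ≠ m and μ_m = ∑_k (Σ^{-1}γ)_k/2 − 1, and Θ is the symmetric zero-row-sum matrix constructed from Σ^{-1} as in the H\"usler–Reiss reparametrization. -/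

import Mathlib

open Matrix BigOperators

private theorem stmt5_key {n : ℕ} (S : Matrix (Fin n) (Fin n) ℝ)
    (hS : ∀ j k, S j k = S k j) (a : Fin n → ℝ) (c : ℝ) :
    c * ((∑ k, ∑ l, S k l) * c + ∑ j, (-∑ l, S j l) * a j)
      + ∑ i, a i * ((-∑ l, S i l) * c + ∑ j, S i j * a j)
    = ∑ i, (a i - c) * ∑ j, S i j * (a j - c) := by
  set T := ∑ j, ∑ k, S j k * a j * a k with hT
  set R := ∑ j, (∑ l, S j l) * a j with hR
  set R2 := ∑ k, (∑ l, S l k) * a k with hR2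
  set Sg := ∑ k, ∑ l, S k l with hSg
  have swap : ∑ j, ∑ k, S j k * a k = R2 := by
    rw [Finset.sum_comm, hR2]
    exact Finset.sum_congr rfl fun k _ => by rw [Finset.sum_mul]
  have hrhs : ∑ i, (a i - c) * ∑ j, S i j * (a j - c) = T - c*R - c*R2 + c*c*Sg := by
    have inner : ∀ i, (a i - c) * ∑ j, S i j * (a j - c)
        = (∑ k, S i k * a i * a k) - c * ((∑ l, S i l) * a i)
          - c * (∑ k, S i k * a k) + c * c * (∑ l, S i l) := by
      intro i
      rw [Finset.mul_sum]
      have h1 : ∀ k, (a i - c) * (S i k * (a k - c))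
          = S i k * a i * a k - c * (S i k * a i) - c * (S i k * a k) + c * c * S i k :=
        fun k => by ring
      simp_rw [h1, Finset.sum_add_distrib, Finset.sum_sub_distrib, ← Finset.mul_sum]
      rw [show ∑ k, S i k * a i = (∑ l, S i l) * a i from by rw [Finset.sum_mul]]
    simp_rw [inner, Finset.sum_add_distrib, Finset.sum_sub_distrib, ← Finset.mul_sum, swap]
    rfl
  have hlhs1 : ∑ j, (-∑ l, S j l) * a j = -R := by
    rw [hR, ← Finset.sum_neg_distrib]
    exact Finset.sum_congr rfl fun j _ => by ring
  have hlhs2 : ∑ i, a i * ((-∑ l, S i l) * c + ∑ j, S i j * a j) = -(c*R) + T := by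
    have inner : ∀ i, a i * ((-∑ l, S i l) * c + ∑ j, S i j * a j)
        = -(c * ((∑ l, S i l) * a i)) + ∑ j, S i j * a i * a j := by
      intro i
      rw [mul_add, Finset.mul_sum]
      congr 1
      · ring
      · exact Finset.sum_congr rfl fun j _ => by ring
    simp_rw [inner, Finset.sum_add_distrib, Finset.sum_neg_distrib, ← Finset.mul_sum]
    rfl
  have hRR2 : R2 = R := by
    rw [hR2, hR]
    refine Finset.sum_congr rfl fun k _ => ?_
    congr 1
    exact Finset.sum_congr rfl fun l _ => hS l k
  rw [hrhs, hlhs1, hlhs2, hRR2]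
  ring

/-- Core identity of the reparametrization lemma: the anchored
Gaussian-type exponential times `1/x_m` equals
`exp(μᵀ log x − ½ (log x)ᵀ Θ (log x))` for the reparametrized `μ` and `Θ`. -/
theorem stmt_5 {n : ℕ} (Sig : Matrix (Fin n) (Fin n) ℝ) (hSig : Sig.PosDef)
    (m : Fin (n + 1)) (γ : Fin n → ℝ)
    (x : Fin (n + 1) → ℝ) (hx : ∀ j, 0 < x j)
    (μ : Fin (n + 1) → ℝ)
    (hμoff : ∀ j : Fin n, μ (m.succAbove j) = -(Sig⁻¹ *ᵥ γ) j / 2)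
    (hμm : μ m = (∑ k, (Sig⁻¹ *ᵥ γ) k) / 2 - 1)
    (Θ : Matrix (Fin (n + 1)) (Fin (n + 1)) ℝ)
    (hoff : ∀ j k : Fin n, Θ (m.succAbove j) (m.succAbove k) = Sig⁻¹ j k)
    (hrowm : ∀ j : Fin n, Θ (m.succAbove j) m = -∑ l, Sig⁻¹ j l)
    (hcolm : ∀ j : Fin n, Θ m (m.succAbove j) = -∑ l, Sig⁻¹ j l)
    (hmm : Θ m m = ∑ k, ∑ l, Sig⁻¹ k l) :
    Real.exp
        (-(1 / 2) * ((fun k : Fin n => Real.log (x (m.succAbove k) / x m)) ⬝ᵥ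
            Sig⁻¹ *ᵥ (fun k : Fin n => Real.log (x (m.succAbove k) / x m)))
          - (1 / 2) * (γ ⬝ᵥ Sig⁻¹ *ᵥ
              (fun k : Fin n => Real.log (x (m.succAbove k) / x m))))
        * (1 / x m)
      = Real.exp
          (μ ⬝ᵥ (fun j => Real.log (x j))
            - (1 / 2) * ((fun j => Real.log (x j)) ⬝ᵥ Θ *ᵥ
                (fun j => Real.log (x j)))) := by
  have hsymm : ∀ j k, Sig⁻¹ j k = Sig⁻¹ k j := by
    intro j k
    have := hSig.1.inv.apply j k
    simpa using this.symm
  set y : Fin (n + 1) → ℝ := fun j => Real.log (x j) with hy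
  have hu : (fun k : Fin n => Real.log (x (m.succAbove k) / x m))
      = fun k => y (m.succAbove k) - y m := by
    funext k; exact Real.log_div (hx _).ne' (hx m).ne'
  rw [hu, show (1:ℝ)/x m = Real.exp (-(y m)) from by
    rw [Real.exp_neg, hy, Real.exp_log (hx m), one_div], ← Real.exp_add]
  congr 1
  set u : Fin n → ℝ := fun k => y (m.succAbove k) - y m with hudef
  have split : ∀ f : Fin (n+1) → ℝ, ∑ i, f i = f m + ∑ i, f (m.succAbove i) :=
    fun f => Fin.sum_univ_succAbove f m
  have A : y ⬝ᵥ Θ *ᵥ y = u ⬝ᵥ Sig⁻¹ *ᵥ u := by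
    simp only [dotProduct, mulVec, hudef]
    simp only [split, hoff, hrowm, hcolm, hmm]
    exact (stmt5_key Sig⁻¹ hsymm (fun k => y (m.succAbove k)) (y m)).symm ▸ rfl
  have hγS : γ ⬝ᵥ Sig⁻¹ *ᵥ u = ∑ k, (Sig⁻¹ *ᵥ γ) k * u k := by
    simp only [dotProduct, mulVec, Finset.mul_sum]
    rw [Finset.sum_comm]
    refine Finset.sum_congr rfl fun k _ => ?_
    rw [Finset.sum_mul]
    exact Finset.sum_congr rfl fun j _ => by rw [hsymm j k]; ring
  have B : μ ⬝ᵥ y = -(1/2) * (γ ⬝ᵥ Sig⁻¹ *ᵥ u) - y m := by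
    rw [hγS]
    simp only [dotProduct]
    rw [split (fun i => μ i * y i)]
    simp only [hμoff, hμm]
    have h1 : ∑ k, (Sig⁻¹ *ᵥ γ) k * u k
        = (∑ k, (Sig⁻¹ *ᵥ γ) k * y (m.succAbove k)) - (∑ k, (Sig⁻¹ *ᵥ γ) k) * y m := by
      simp_rw [hudef, mul_sub, Finset.sum_sub_distrib, Finset.sum_mul]
    rw [h1, show ∑ j, -(Sig⁻¹ *ᵥ γ) j / 2 * y (m.succAbove j)
        = -(1/2) * ∑ j, (Sig⁻¹ *ᵥ γ) j * y (m.succAbove j) from by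
      rw [Finset.mul_sum]
      exact Finset.sum_congr rfl fun j _ => by ring]
    ring
  rw [B, A]
  ring
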